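/- If A is a 3×3 complex matrix that commutes with both H₀ = diag(0,1,2) and V = [[0,1,0],[1,0,1],[0,1,0]], then A is a scalar multiple of the identity matrix, i.e. A = c·I for some c ∈ ℂ. In particular, the only Hermitian observables conserved under all Hamiltonians of the form H₀ + f·V (f ∈ ℝ) are multiples of the identity. -/

import Mathlib

open Matrix

/-- The free Hamiltonian `H₀ = diag(0,1,2)`. -/
noncomputable def H0 : Matrix (Fin 3) (Fin 3) ℂ := !![0, 0, 0; 0, 1, 0; 0, 0, 2]

/-- The dipole interaction Hamiltonian `V`. -/
noncomputable def Vdip : Matrix (Fin 3) (Fin 3) ℂ := !![0, 1, 0; 1, 0, 1; 0, 1, 0]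

/-- any `3×3` complex matrix commuting with both `H₀` and `V`
is a scalar multiple of the identity.  In particular, the only observables
conserved by all Hamiltonians `H₀ + f·V` are multiples of the identity. -/
theorem stmt1 (A : Matrix (Fin 3) (Fin 3) ℂ)
    (hH : A * H0 = H0 * A) (hV : A * Vdip = Vdip * A) :
    ∃ c : ℂ, A = c • (1 : Matrix (Fin 3) (Fin 3) ℂ) := by
  use A 0 0
  have e := fun i j => congrFun (congrFun hH i) j
  have f := fun i j => congrFun (congrFun hV i) j
  simp only [H0, Vdip, Matrix.mul_apply, Fin.sum_univ_three, Matrix.cons_val', Matrix.cons_val_zero,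
    Matrix.cons_val_one, Matrix.head_cons, Matrix.empty_val', Matrix.cons_val_fin_one,
    Matrix.head_fin_const, Matrix.cons_val_two, Matrix.tail_cons, Matrix.of_apply] at e f
  have e01 := e 0 1; have e02 := e 0 2; have e10 := e 1 0; have e12 := e 1 2
  have e20 := e 2 0; have e21 := e 2 1
  have f01 := f 0 1; have f12 := f 1 2
  simp only [Matrix.cons_val] at e01 e02 e10 e12 e20 e21 f01 f12
  norm_num [Matrix.vecHead, Matrix.vecTail] at e01 e02 e10 e12 e20 e21 f01 f12
  have e12' : A 1 2 = 0 := by linear_combination e12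
  have e21' : A 2 1 = 0 := by linear_combination -e21
  ext i j
  fin_cases i <;> fin_cases j <;> simp [Matrix.one_apply] <;>
    first
    | linear_combination e01
    | linear_combination e02
    | linear_combination -e10
    | linear_combination e12'
    | linear_combination e20
    | linear_combination e21'
    | linear_combination -f01 + e02
    | linear_combination -f01 - f12
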